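/- Let X be a geodesic metric space, F ⊂ X, and suppose there is D > 0 such that every geodesic segment [p,q] either has d(π_F(p), π_F(q)) ≤ D or comes within distance D of F, and every triangle Δ(p, q, π_F(p)) with q ∈ F is D-thin. Then there is D₂ > 0 (depending only on D) such that whenever d(π_F(p), π_F(q)) > D₂, the geodesic [p,q] passes within D₂ of both π_F(p) and π_F(q). -/

import Mathlib

open Set

/-- A geodesic space: any two points are joined by a geodesic segment. -/
def IsGeodesicSpace (X : Type*) [MetricSpace X] : Prop :=
  ∀ x y : X, ∃ g : ℝ → X, g 0 = x ∧ g (dist x y) = y ∧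
    ∀ s ∈ Icc (0 : ℝ) (dist x y), ∀ t ∈ Icc (0 : ℝ) (dist x y),
      dist (g s) (g t) = |s - t|

/-- `g` is a (unit-speed) geodesic segment from `x` to `y`. -/
def GeodSeg {X : Type*} [MetricSpace X] (g : ℝ → X) (x y : X) : Prop :=
  g 0 = x ∧ g (dist x y) = y ∧
    ∀ s ∈ Icc (0 : ℝ) (dist x y), ∀ t ∈ Icc (0 : ℝ) (dist x y),
      dist (g s) (g t) = |s - t|

/-- The image of a geodesic segment from `x` to `y` (a "side"). -/
def SegImg {X : Type*} [MetricSpace X] (g : ℝ → X) (x y : X) : Set X :=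
  g '' Icc (0 : ℝ) (dist x y)

private lemma aux_near {X : Type*} [MetricSpace X] (F : Set X)
    (π : X → X) (hmem : ∀ x, π x ∈ F) (hnear : ∀ x, ∀ z ∈ F, dist x (π x) ≤ dist x z)
    (D : ℝ) (hD : 0 < D)
    (hdichotomy : ∀ p q : X, ∀ g : ℝ → X, GeodSeg g p q →
      dist (π p) (π q) ≤ D ∨ ∃ t ∈ Icc (0 : ℝ) (dist p q), Metric.infDist (g t) F ≤ D)
    (p q : X) (g : ℝ → X) (hg : GeodSeg g p q) (hfar : D < dist (π p) (π q)) :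
    ∃ s ∈ Icc (0 : ℝ) (dist p q), dist (g s) (π p) ≤ 2 * D := by
  obtain ⟨h0, hd, hiso⟩ := hg
  set d := dist p q with hdd
  have hFne : F.Nonempty := ⟨π p, hmem p⟩
  -- the projection realizes the infimum distance
  have hproj : ∀ x : X, dist x (π x) ≤ Metric.infDist x F := by
    intro x
    by_contra h
    push_neg at h
    obtain ⟨y, hy, hlt⟩ := (Metric.infDist_lt_iff hFne).1 h
    exact absurd (hnear x y hy) (not_le.2 hlt)
  set T : Set ℝ := {t : ℝ | t ∈ Icc (0 : ℝ) d ∧ Metric.infDist (g t) F ≤ D} with hT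
  have hTne : T.Nonempty := by
    rcases hdichotomy p q g ⟨h0, hd, hiso⟩ with h | ⟨t, ht, hlt⟩
    · exact absurd h (not_le.2 hfar)
    · exact ⟨t, ht, hlt⟩
  have hTbdd : BddBelow T := ⟨0, fun t ht => ht.1.1⟩
  set t₀ := sInf T with ht₀
  have ht₀0 : 0 ≤ t₀ := le_csInf hTne fun t ht => ht.1.1
  obtain ⟨t₁, ht₁⟩ := id hTne
  have ht₀d : t₀ ≤ d := le_trans (csInf_le hTbdd ht₁) ht₁.1.2
  refine ⟨t₀, ⟨ht₀0, ht₀d⟩, ?_⟩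
  -- approximate argument
  refine le_of_forall_pos_le_add fun ε hε => ?_
  have hε4 : 0 < ε / 4 := by linarith
  obtain ⟨t, htT, htlt⟩ := Real.lt_sInf_add_pos hTne hε4
  have htt₀ : t₀ ≤ t := csInf_le hTbdd htT
  rcases eq_or_lt_of_le ht₀0 with h00 | h0pos
  · -- t₀ = 0
    have : dist (g t₀) (π p) ≤ Metric.infDist (g t₀) F := by
      rw [← h00, h0]
      exact hproj p
    have h2 : Metric.infDist (g t₀) F ≤ Metric.infDist (g t) F + dist (g t₀) (g t) :=
      Metric.infDist_le_infDist_add_dist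
    have h3 : dist (g t₀) (g t) = |t₀ - t| :=
      hiso t₀ ⟨ht₀0, ht₀d⟩ t ⟨htT.1.1, htT.1.2⟩
    have h4 : |t₀ - t| ≤ ε / 4 := by
      rw [abs_sub_comm, abs_of_nonneg (by linarith)]
      linarith
    calc dist (g t₀) (π p) ≤ Metric.infDist (g t) F + dist (g t₀) (g t) := this.trans h2
    _ ≤ D + ε / 4 := by rw [h3]; exact add_le_add htT.2 h4
    _ ≤ 2 * D + ε := by linarith
  · -- t₀ > 0 : pick s slightly below t₀
    set s := max 0 (t₀ - ε / 4) with hs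
    have hs0 : 0 ≤ s := le_max_left _ _
    have hslt : s < t₀ := max_lt h0pos (by linarith)
    have hsd : s ≤ d := le_trans hslt.le ht₀d
    have hst₀ : t₀ - s ≤ ε / 4 := by
      have : t₀ - ε / 4 ≤ s := le_max_right _ _
      linarith
    -- the restriction of g to [0,s] is a geodesic from p to g s
    have hds : dist p (g s) = s := by
      rw [← h0, hiso 0 ⟨le_refl 0, dist_nonneg⟩ s ⟨hs0, hsd⟩]
      rw [abs_sub_comm, sub_zero, abs_of_nonneg hs0]
    have hgs : GeodSeg g p (g s) := by
      refine ⟨h0, by rw [hds], ?_⟩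
      rw [hds]
      intro a ha b hb
      exact hiso a ⟨ha.1, ha.2.trans hsd⟩ b ⟨hb.1, hb.2.trans hsd⟩
    have hπs : dist (π p) (π (g s)) ≤ D := by
      rcases hdichotomy p (g s) g hgs with h | ⟨u, hu, hule⟩
      · exact h
      · rw [hds] at hu
        have huT : u ∈ T := ⟨⟨hu.1, hu.2.trans hsd⟩, hule⟩
        have : t₀ ≤ u := csInf_le hTbdd huT
        linarith [hu.2]
    -- distance estimates
    have h1 : dist (g t₀) (g s) = t₀ - s := by
      rw [hiso t₀ ⟨ht₀0, ht₀d⟩ s ⟨hs0, hsd⟩, abs_of_nonneg (by linarith)]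
    have h2 : dist (g s) (π (g s)) ≤ D + (t - s) := by
      have ha : dist (g s) (π (g s)) ≤ Metric.infDist (g s) F := hproj _
      have hb : Metric.infDist (g s) F ≤ Metric.infDist (g t) F + dist (g s) (g t) :=
        Metric.infDist_le_infDist_add_dist
      have hc : dist (g s) (g t) = t - s := by
        rw [hiso s ⟨hs0, hsd⟩ t ⟨htT.1.1, htT.1.2⟩, abs_of_nonpos (by linarith), neg_sub]
      calc dist (g s) (π (g s)) ≤ Metric.infDist (g t) F + dist (g s) (g t) := ha.trans hb
      _ ≤ D + (t - s) := by rw [hc]; exact add_le_add_left htT.2 _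
    calc dist (g t₀) (π p)
        ≤ dist (g t₀) (g s) + dist (g s) (π (g s)) + dist (π (g s)) (π p) := dist_triangle4 _ _ _ _
      _ ≤ (t₀ - s) + (D + (t - s)) + D := by
          refine add_le_add (add_le_add (le_of_eq h1) h2) ?_
          rw [dist_comm]; exact hπs
      _ ≤ 2 * D + ε := by linarith

/-- In a geodesic space, if every geodesic either has endpoints projecting
`D`-close to each other on `F` or passes `D`-close to `F`, and every triangle
`Δ(p, q, π_F p)` with `q ∈ F` is `D`-thin, then there is `D₂ > 0` such that whenever
`dist (π_F p) (π_F q) > D₂`, the geodesic `[p, q]` passes within `D₂` of both `π_F p` and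
`π_F q`. -/
theorem geodesic_passes_near_projections
    {X : Type*} [MetricSpace X] (hX : IsGeodesicSpace X)
    (F : Set X) (hFne : F.Nonempty) (hFcl : IsClosed F)
    (π : X → X) (hmem : ∀ x, π x ∈ F) (hnear : ∀ x, ∀ z ∈ F, dist x (π x) ≤ dist x z)
    (D : ℝ) (hD : 0 < D)
    (hdichotomy : ∀ p q : X, ∀ g : ℝ → X, GeodSeg g p q →
      dist (π p) (π q) ≤ D ∨ ∃ t ∈ Icc (0 : ℝ) (dist p q), Metric.infDist (g t) F ≤ D)
    (hthin : ∀ p : X, ∀ q ∈ F, ∀ g₁ g₂ g₃ : ℝ → X,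
      GeodSeg g₁ p q → GeodSeg g₂ p (π p) → GeodSeg g₃ (π p) q →
      (∀ z ∈ SegImg g₁ p q, Metric.infDist z (SegImg g₂ p (π p) ∪ SegImg g₃ (π p) q) ≤ D) ∧
      (∀ z ∈ SegImg g₂ p (π p), Metric.infDist z (SegImg g₁ p q ∪ SegImg g₃ (π p) q) ≤ D) ∧
      (∀ z ∈ SegImg g₃ (π p) q, Metric.infDist z (SegImg g₁ p q ∪ SegImg g₂ p (π p)) ≤ D)) :
    ∃ D₂ : ℝ, 0 < D₂ ∧ ∀ p q : X, ∀ g : ℝ → X, GeodSeg g p q →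
      D₂ < dist (π p) (π q) →
      (∃ s ∈ Icc (0 : ℝ) (dist p q), dist (g s) (π p) ≤ D₂) ∧
      (∃ t ∈ Icc (0 : ℝ) (dist p q), dist (g t) (π q) ≤ D₂) := by
  refine ⟨2 * D, by linarith, fun p q g hg hfar => ?_⟩
  have hfarD : D < dist (π p) (π q) := lt_of_lt_of_le (by linarith) hfar.le
  constructor
  · exact aux_near F π hmem hnear D hD hdichotomy p q g hg hfarD
  · -- apply the lemma to the reversed geodesic
    obtain ⟨h0, hd, hiso⟩ := hg
    set d := dist p q with hdd
    have hqp : dist q p = d := dist_comm q p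
    set h : ℝ → X := fun u => g (d - u) with hh
    have hmem' : ∀ u ∈ Icc (0:ℝ) d, d - u ∈ Icc (0:ℝ) d := by
      intro u hu; exact ⟨by linarith [hu.2], by linarith [hu.1]⟩
    have hgh : GeodSeg h q p := by
      refine ⟨?_, ?_, ?_⟩
      · show g (d - 0) = q
        rw [sub_zero, hd]
      · show g (d - dist q p) = p
        rw [hqp, sub_self, h0]
      · rw [hqp]
        intro a ha b hb
        show dist (g (d - a)) (g (d - b)) = |a - b|
        rw [hiso _ (hmem' a ha) _ (hmem' b hb)]
        rw [show d - a - (d - b) = b - a by ring, abs_sub_comm]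
    have hfar' : D < dist (π q) (π p) := by rwa [dist_comm]
    obtain ⟨s, hs, hsle⟩ :=
      aux_near F π hmem hnear D hD hdichotomy q p h hgh hfar'
    rw [hqp] at hs
    exact ⟨d - s, hmem' s hs, hsle⟩
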